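/- On ℝ⁸ with standard coframe ξ⁰,...,ξ³,η⁰,...,η³, the 4-form −Ω₁+Ω₂−Ω₃ equals ξ⁰∧ζ + *_ζ ζ where ζ := ξ¹∧(ξ³∧ξ² + η⁰∧η¹ − η³∧η²) + Re((ξ³+ξ²i)∧(η⁰+η¹i)∧(η³−η²i)) is a 3-form on the 7-dimensional subspace spanned by ξ¹,ξ²,ξ³,η⁰,η¹,η²,η³, and *_ζ denotes the Hodge star on that 7-dimensional subspace. -/
import Mathlib


/-!
Statement 11: on ℝ⁸ with standard coframe ξ⁰,…,ξ³,η⁰,…,η⁴ (modelled by e 0,…,e 7,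
with ηⁱ = e (4+i)), the 4-form −Ω₁+Ω₂−Ω₃ equals ξ⁰∧ζ + *ζ, where ζ is the G₂
3-form on the 7-dimensional subspace spanned by ξ¹,ξ²,ξ³,η⁰,…,η³ (i.e. e 1,…,e 7)
and * is the Hodge star of that subspace, characterized on basis 3-forms by:
for every permutation σ of the seven indices,
*(E σ(0) ∧ E σ(1) ∧ E σ(2)) = sign σ • (E σ(3) ∧ E σ(4) ∧ E σ(5) ∧ E σ(6)).
-/

open ExteriorAlgebra
open scoped TensorProduct

set_option synthInstance.maxHeartbeats 1000000
set_option maxHeartbeats 1000000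

noncomputable section

/-- The standard coframe of ℝ⁸ inside its exterior algebra. -/
def e (i : Fin 8) : ExteriorAlgebra ℝ (Fin 8 → ℝ) := ι ℝ (Pi.single i 1)

/-- The coframe of the 7-dimensional subspace: ξ¹,ξ²,ξ³,η⁰,η¹,η²,η³. -/
def E (i : Fin 7) : ExteriorAlgebra ℝ (Fin 8 → ℝ) := e i.succ

/-- The real part of a complex-valued form. -/
def reC : ℂ ⊗[ℝ] ExteriorAlgebra ℝ (Fin 8 → ℝ) →ₗ[ℝ] ExteriorAlgebra ℝ (Fin 8 → ℝ) :=
  (TensorProduct.lid ℝ (ExteriorAlgebra ℝ (Fin 8 → ℝ))).toLinearMap ∘ₗ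
    TensorProduct.map Complex.reLm LinearMap.id

/-- Ω₁ = ξ⁰∧ξ¹∧ξ²∧ξ³. -/
def Ω₁ : ExteriorAlgebra ℝ (Fin 8 → ℝ) := e 0 * e 1 * e 2 * e 3

/-- Ω₃ = η⁰∧η¹∧η²∧η³. -/
def Ω₃ : ExteriorAlgebra ℝ (Fin 8 → ℝ) := e 4 * e 5 * e 6 * e 7

/-- Ω₂, the twelve-term mixed 4-form. -/
def Ω₂ : ExteriorAlgebra ℝ (Fin 8 → ℝ) :=
    e 0 * e 1 * e 4 * e 5 + e 0 * e 1 * e 6 * e 7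
  + e 2 * e 3 * e 4 * e 5 + e 2 * e 3 * e 6 * e 7
  + e 0 * e 2 * e 4 * e 6 - e 0 * e 2 * e 5 * e 7
  - e 1 * e 3 * e 4 * e 6 + e 1 * e 3 * e 5 * e 7
  + e 0 * e 3 * e 4 * e 7 + e 0 * e 3 * e 5 * e 6
  + e 1 * e 2 * e 4 * e 7 + e 1 * e 2 * e 5 * e 6

/-- ζ = ξ¹∧(ξ³∧ξ² + η⁰∧η¹ − η³∧η²) + Re((ξ³+ξ²i)∧(η⁰+η¹i)∧(η³−η²i)). -/
def ζ : ExteriorAlgebra ℝ (Fin 8 → ℝ) :=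
  e 1 * (e 3 * e 2 + e 4 * e 5 - e 7 * e 6) +
    reC (((1 : ℂ) ⊗ₜ e 3 + Complex.I ⊗ₜ e 2) * ((1 : ℂ) ⊗ₜ e 4 + Complex.I ⊗ₜ e 5) *
      ((1 : ℂ) ⊗ₜ e 7 - Complex.I ⊗ₜ e 6))

/-- Auxiliary permutations for the Hodge star computations. -/
def σa : Equiv.Perm (Fin 7) := ⟨![0,2,1,3,4,5,6], ![0,2,1,3,4,5,6], by decide, by decide⟩
def σb : Equiv.Perm (Fin 7) := ⟨![0,3,4,1,2,5,6], ![0,3,4,1,2,5,6], by decide, by decide⟩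
def σc : Equiv.Perm (Fin 7) := ⟨![0,6,5,1,2,3,4], ![0,3,4,5,6,2,1], by decide, by decide⟩
def σd : Equiv.Perm (Fin 7) := ⟨![2,3,6,0,1,4,5], ![3,4,0,1,5,6,2], by decide, by decide⟩
def σe : Equiv.Perm (Fin 7) := ⟨![2,4,5,0,1,3,6], ![3,4,0,5,1,2,6], by decide, by decide⟩
def σf : Equiv.Perm (Fin 7) := ⟨![1,3,5,0,2,4,6], ![3,0,4,1,5,2,6], by decide, by decide⟩
def σg : Equiv.Perm (Fin 7) := ⟨![1,4,6,0,2,3,5], ![3,0,4,5,1,6,2], by decide, by decide⟩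

lemma zeta_expand : ζ = e 1 * e 3 * e 2 + e 1 * e 4 * e 5 - e 1 * e 7 * e 6
    + e 3 * e 4 * e 7 + e 3 * e 5 * e 6 + e 2 * e 4 * e 6 - e 2 * e 5 * e 7 := by
  unfold ζ reC
  simp only [map_add, map_sub, mul_add, add_mul, mul_sub, sub_mul,
    Algebra.TensorProduct.tmul_mul_tmul, LinearMap.comp_apply, TensorProduct.map_tmul,
    TensorProduct.lid_tmul, LinearMap.id_apply, Complex.reLm_coe, Complex.I_mul_I,
    one_mul, mul_one, Complex.one_re, Complex.I_re, Complex.neg_re, zero_smul, one_smul,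
    neg_smul, smul_neg, neg_neg, mul_assoc,
    neg_one_smul, LinearEquiv.coe_coe, LinearEquiv.coe_toLinearMap,
    Complex.mul_re, Complex.one_im, Complex.I_im,
    Complex.neg_im, mul_zero, zero_mul, sub_zero, zero_sub, neg_zero]
  abel

lemma eswap (i j : Fin 8) : e i * e j = -(e j * e i) := by
  have h := ExteriorAlgebra.ι_add_mul_swap (R := ℝ) (M := Fin 8 → ℝ) (Pi.single i 1) (Pi.single j 1)
  exact eq_neg_of_add_eq_zero_left h

theorem cayley_form_g2_decomposition
    (hodge : ExteriorAlgebra ℝ (Fin 8 → ℝ) →ₗ[ℝ] ExteriorAlgebra ℝ (Fin 8 → ℝ))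
    -- `hodge` is the Hodge star on 3-forms of the oriented Euclidean 7-space
    -- spanned by ξ¹,ξ²,ξ³,η⁰,η¹,η²,η³ :
    (hhodge : ∀ σ : Equiv.Perm (Fin 7),
      hodge (E (σ 0) * E (σ 1) * E (σ 2)) =
        (Equiv.Perm.sign σ : ℤ) • (E (σ 3) * E (σ 4) * E (σ 5) * E (σ 6))) :
    -Ω₁ + Ω₂ - Ω₃ = e 0 * ζ + hodge ζ := by
  have ha : hodge (e 1 * e 3 * e 2) = -(e 4 * e 5 * e 6 * e 7) := by
    have h := hhodge σa
    rw [show ((Equiv.Perm.sign σa : ℤ)) = -1 from by decide, neg_one_zsmul] at h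
    exact h
  have hb : hodge (e 1 * e 4 * e 5) = e 2 * e 3 * e 6 * e 7 := by
    have h := hhodge σb
    rw [show ((Equiv.Perm.sign σb : ℤ)) = 1 from by decide, one_zsmul] at h
    exact h
  have hc : hodge (e 1 * e 7 * e 6) = -(e 2 * e 3 * e 4 * e 5) := by
    have h := hhodge σc
    rw [show ((Equiv.Perm.sign σc : ℤ)) = -1 from by decide, neg_one_zsmul] at h
    exact h
  have hd : hodge (e 3 * e 4 * e 7) = e 1 * e 2 * e 5 * e 6 := by
    have h := hhodge σd
    rw [show ((Equiv.Perm.sign σd : ℤ)) = 1 from by decide, one_zsmul] at h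
    exact h
  have he : hodge (e 3 * e 5 * e 6) = e 1 * e 2 * e 4 * e 7 := by
    have h := hhodge σe
    rw [show ((Equiv.Perm.sign σe : ℤ)) = 1 from by decide, one_zsmul] at h
    exact h
  have hf : hodge (e 2 * e 4 * e 6) = e 1 * e 3 * e 5 * e 7 := by
    have h := hhodge σf
    rw [show ((Equiv.Perm.sign σf : ℤ)) = 1 from by decide, one_zsmul] at h
    exact h
  have hg : hodge (e 2 * e 5 * e 7) = e 1 * e 3 * e 4 * e 6 := by
    have h := hhodge σg
    rw [show ((Equiv.Perm.sign σg : ℤ)) = 1 from by decide, one_zsmul] at h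
    exact h
  rw [zeta_expand]
  simp only [map_add, map_sub, ha, hb, hc, hd, he, hf, hg]
  unfold Ω₁ Ω₂ Ω₃
  simp only [mul_assoc, eswap 3 2, eswap 7 6, mul_neg, neg_mul, neg_neg, mul_add, mul_sub,
    add_mul, sub_mul]
  abel
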